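/- arXiv:2010.07619 — 3 statements merged into one kernel-verified Lean document; each statement's English description precedes it below -/
import Mathlib

section
/- Fix a positive integer t and real numbers a_1 < … < a_t and b_1 < … < b_t with a_i ≤ b_i for every i, such that all the differences a_i − a_j, b_i − b_j, a_i − b_j are integers; assume a_1 ≥ 1/2. Let α be a real number and k ∈ {1,…,t} an index with a_k ≤ α ≤ b_k and α − a_k ∈ ℤ. Then the set {i ∈ {1,…,t} : α − k + i ≤ b_i} is nonempty (it contains k); let k_m denote its least element. Then for every index i with k_m ≤ i ≤ k one has a_i ≤ α − k + i ≤ b_i and (α − k + i) − a_i ∈ ℤ (so α − k + i lies in the segment [a_i, b_i] = {a_i, a_i+1, …, b_i}); in particular α − k + i ≥ 1/2 > 0 for all such i. -/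
/-- Membership in the segment `[x, y] = {x, x+1, …, y}` of reals. -/
def inSeg (x y z : ℝ) : Prop := x ≤ z ∧ z ≤ y ∧ ∃ n : ℤ, z - x = (n : ℝ)

lemma gap_aux (t : ℕ) (c : ℕ → ℝ)
    (hmono : ∀ i j, 1 ≤ i → i < j → j ≤ t → c i < c j)
    (hint : ∀ i j, 1 ≤ i → i ≤ t → 1 ≤ j → j ≤ t → ∃ n : ℤ, c i - c j = (n : ℝ)) :
    ∀ i j, 1 ≤ i → i ≤ j → j ≤ t → c i + ((j - i : ℕ) : ℝ) ≤ c j := by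
  intro i j hi hij hjt
  induction j, hij using Nat.le_induction with
  | base => simp
  | succ j hij ih =>
    have hjt' : j ≤ t := by omega
    obtain ⟨n, hn⟩ := hint (j+1) j (by omega) hjt (by omega) hjt'
    have hlt := hmono j (j+1) (by omega) (by omega) hjt
    have hn1 : (1 : ℤ) ≤ n := by
      have : (0 : ℝ) < (n : ℝ) := by linarith
      exact_mod_cast this
    have h1 : c j + 1 ≤ c (j+1) := by
      have : (1 : ℝ) ≤ (n : ℝ) := by exact_mod_cast hn1
      linarith
    have h2 := ih hjt'
    have hcast : ((j + 1 - i : ℕ) : ℝ) = ((j - i : ℕ) : ℝ) + 1 := by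
      have h : j + 1 - i = (j - i) + 1 := by omega
      rw [h]; push_cast; ring
    rw [hcast]; linarith

/-- the set `{i : α - k + i ≤ b i}` contains `k`, and with `k_m` its least
element, `α - k + i ∈ [a_i, b_i]` and `α - k + i ≥ 1/2 > 0` for all `k_m ≤ i ≤ k`. -/
theorem alpha_shifts_in_segments (t : ℕ) (ht : 0 < t) (a b : ℕ → ℝ)
    (hamono : ∀ i j, 1 ≤ i → i < j → j ≤ t → a i < a j)
    (hbmono : ∀ i j, 1 ≤ i → i < j → j ≤ t → b i < b j)
    (hab : ∀ i, 1 ≤ i → i ≤ t → a i ≤ b i)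
    (hint_aa : ∀ i j, 1 ≤ i → i ≤ t → 1 ≤ j → j ≤ t → ∃ n : ℤ, a i - a j = (n : ℝ))
    (hint_bb : ∀ i j, 1 ≤ i → i ≤ t → 1 ≤ j → j ≤ t → ∃ n : ℤ, b i - b j = (n : ℝ))
    (hint_ab : ∀ i j, 1 ≤ i → i ≤ t → 1 ≤ j → j ≤ t → ∃ n : ℤ, a i - b j = (n : ℝ))
    (ha1 : (1/2 : ℝ) ≤ a 1)
    (α : ℝ) (k : ℕ) (hk1 : 1 ≤ k) (hkt : k ≤ t)
    (hak : a k ≤ α) (hbk : α ≤ b k) (hαk : ∃ n : ℤ, α - a k = (n : ℝ)) :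
    k ∈ {i : ℕ | 1 ≤ i ∧ α - (k : ℝ) + (i : ℝ) ≤ b i} ∧
    ∀ i, sInf {i : ℕ | 1 ≤ i ∧ α - (k : ℝ) + (i : ℝ) ≤ b i} ≤ i → i ≤ k →
      inSeg (a i) (b i) (α - (k : ℝ) + (i : ℝ)) ∧
      (1/2 : ℝ) ≤ α - (k : ℝ) + (i : ℝ) ∧ (0 : ℝ) < α - (k : ℝ) + (i : ℝ) := by
  set S : Set ℕ := {i : ℕ | 1 ≤ i ∧ α - (k : ℝ) + (i : ℝ) ≤ b i} with hS
  have hkS : k ∈ S := ⟨hk1, by linarith⟩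
  have hmS : sInf S ∈ S := Nat.sInf_mem ⟨k, hkS⟩
  refine ⟨hkS, fun i hmi hik => ?_⟩
  set m := sInf S with hm
  have hm1 : 1 ≤ m := hmS.1
  have hmk : m ≤ k := Nat.sInf_le hkS
  have hi1 : 1 ≤ i := le_trans hm1 hmi
  have hit : i ≤ t := le_trans hik hkt
  -- lower bound
  have hga := gap_aux t a hamono hint_aa i k hi1 hik hkt
  have hcak : ((k - i : ℕ) : ℝ) = (k : ℝ) - (i : ℝ) := by
    have : (k - i : ℕ) = k - i := rfl
    push_cast [Nat.cast_sub hik]; ring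
  rw [hcak] at hga
  have hlow : a i ≤ α - (k : ℝ) + (i : ℝ) := by linarith
  -- upper bound
  have hgb := gap_aux t b hbmono hint_bb m i hm1 hmi hit
  have hcbm : ((i - m : ℕ) : ℝ) = (i : ℝ) - (m : ℝ) := by
    push_cast [Nat.cast_sub hmi]; ring
  rw [hcbm] at hgb
  have hmb := hmS.2
  have hup : α - (k : ℝ) + (i : ℝ) ≤ b i := by linarith
  -- integrality
  obtain ⟨n, hn⟩ := hαk
  obtain ⟨p, hp⟩ := hint_aa k i hk1 hkt hi1 hit
  have hint : ∃ q : ℤ, α - (k : ℝ) + (i : ℝ) - a i = (q : ℝ) := by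
    refine ⟨n + p + (i : ℤ) - (k : ℤ), ?_⟩
    push_cast
    linarith
  -- a 1 ≤ a i
  have ha1i : a 1 ≤ a i := by
    rcases eq_or_lt_of_le hi1 with h | h
    · rw [← h]
    · exact le_of_lt (hamono 1 i le_rfl h hit)
  exact ⟨⟨hlow, hup, hint⟩, by linarith, by linarith⟩
end

section
/- Fix a positive integer t and real numbers a_1 < … < a_t and b_1 < … < b_t with a_i ≤ b_i for every i, such that all the differences a_i − a_j, b_i − b_j, a_i − b_j are integers; assume a_1 ≥ 1/2. Let α be a real number and k ∈ {1,…,t} an index with a_k ≤ α ≤ b_k and α − a_k ∈ ℤ, and let k_m be the least index i with α − k + i ≤ b_i. Define r_i = b_i for i < k_m and for i > k, and r_i = α − k + i − 1 for k_m ≤ i ≤ k. Then the sequence i ↦ a_i + r_i is strictly increasing on {1,…,t}, one has a_i + r_i ≥ 2a_1 − 1 ≥ 0 for every i, and a_i + r_i > 0 for every i with r_i ≥ a_i. Equivalently, setting e_i = −(a_i + r_i)/2, one has e_t < e_{t−1} < … < e_1, and e_i < 0 whenever r_i ≥ a_i. -/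
/-- with `r i = b i` for `i < k_m` or `i > k` and `r i = α - k + i - 1` for
`k_m ≤ i ≤ k`, the sequence `a i + r i` is strictly increasing, bounded below by
`2 a_1 - 1 ≥ 0`, and positive whenever `r i ≥ a i`; equivalently the exponents
`e i = -(a i + r i)/2` are strictly decreasing in `i` and negative whenever `r i ≥ a i`. -/
theorem pi_k_well_defined (t : ℕ) (ht : 0 < t) (a b : ℕ → ℝ)
    (hamono : ∀ i j, 1 ≤ i → i < j → j ≤ t → a i < a j)
    (hbmono : ∀ i j, 1 ≤ i → i < j → j ≤ t → b i < b j)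
    (hab : ∀ i, 1 ≤ i → i ≤ t → a i ≤ b i)
    (hint_aa : ∀ i j, 1 ≤ i → i ≤ t → 1 ≤ j → j ≤ t → ∃ n : ℤ, a i - a j = (n : ℝ))
    (hint_bb : ∀ i j, 1 ≤ i → i ≤ t → 1 ≤ j → j ≤ t → ∃ n : ℤ, b i - b j = (n : ℝ))
    (hint_ab : ∀ i j, 1 ≤ i → i ≤ t → 1 ≤ j → j ≤ t → ∃ n : ℤ, a i - b j = (n : ℝ))
    (ha1 : (1/2 : ℝ) ≤ a 1)
    (α : ℝ) (k : ℕ) (hk1 : 1 ≤ k) (hkt : k ≤ t)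
    (hak : a k ≤ α) (hbk : α ≤ b k) (hαk : ∃ n : ℤ, α - a k = (n : ℝ))
    (km : ℕ) (hkm : km = sInf {i : ℕ | 1 ≤ i ∧ α - (k : ℝ) + (i : ℝ) ≤ b i})
    (r : ℕ → ℝ)
    (hr1 : ∀ i, i < km → r i = b i)
    (hr2 : ∀ i, k < i → r i = b i)
    (hr3 : ∀ i, km ≤ i → i ≤ k → r i = α - (k : ℝ) + (i : ℝ) - 1) :
    (∀ i j, 1 ≤ i → i < j → j ≤ t → a i + r i < a j + r j) ∧
    (∀ i, 1 ≤ i → i ≤ t → 2 * a 1 - 1 ≤ a i + r i) ∧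
    ((0 : ℝ) ≤ 2 * a 1 - 1) ∧
    (∀ i, 1 ≤ i → i ≤ t → a i ≤ r i → 0 < a i + r i) ∧
    (∀ i j, 1 ≤ i → i < j → j ≤ t → -(a j + r j) / 2 < -(a i + r i) / 2) ∧
    (∀ i, 1 ≤ i → i ≤ t → a i ≤ r i → -(a i + r i) / 2 < 0) := by
  -- basic monotonicity (≤ versions)
  have ha_le : ∀ i j, 1 ≤ i → i ≤ j → j ≤ t → a i ≤ a j := by
    intro i j hi hij hj
    rcases eq_or_lt_of_le hij with h | h
    · rw [h]
    · exact (hamono i j hi h hj).le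
  have hb_le : ∀ i j, 1 ≤ i → i ≤ j → j ≤ t → b i ≤ b j := by
    intro i j hi hij hj
    rcases eq_or_lt_of_le hij with h | h
    · rw [h]
    · exact (hbmono i j hi h hj).le
  -- a j - a i ≥ j - i by integrality
  have hstep : ∀ i j, 1 ≤ i → i ≤ j → j ≤ t → (j : ℝ) - (i : ℝ) ≤ a j - a i := by
    intro i j h1 hij hjt
    obtain ⟨d, rfl⟩ := Nat.exists_eq_add_of_le hij
    clear hij
    induction d with
    | zero => simp
    | succ d ih =>
      have hdt : i + d ≤ t := by omega
      have h2 := ih hdt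
      have hpos : 0 < a (i + d + 1) - a (i + d) :=
        sub_pos.mpr (hamono (i + d) (i + d + 1) (by omega) (by omega) (by omega))
      obtain ⟨n, hn⟩ := hint_aa (i + d + 1) (i + d) (by omega) (by omega) (by omega) hdt
      have h3 : (1 : ℝ) ≤ a (i + d + 1) - a (i + d) := by
        rw [hn] at hpos ⊢
        exact_mod_cast hpos
      push_cast at h2 ⊢
      have : i + (d + 1) = i + d + 1 := by omega
      rw [this]
      linarith
  -- α - b i is an integer
  have hαb : ∀ i, 1 ≤ i → i ≤ t → ∃ n : ℤ, α - b i = (n : ℝ) := by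
    intro i h1 hit
    obtain ⟨n, hn⟩ := hαk
    obtain ⟨m, hm⟩ := hint_ab k i hk1 hkt h1 hit
    exact ⟨n + m, by push_cast; linarith⟩
  -- k is in the set
  have hkS : k ∈ {i : ℕ | 1 ≤ i ∧ α - (k : ℝ) + (i : ℝ) ≤ b i} := ⟨hk1, by linarith⟩
  have hkmk : km ≤ k := hkm ▸ Nat.sInf_le hkS
  have hkm1 : 1 ≤ km := (hkm ▸ Nat.sInf_mem ⟨k, hkS⟩).1
  -- minimality: for i < km we have b i ≤ α - k + i - 1
  have hbi : ∀ i, 1 ≤ i → i < km → b i ≤ α - (k : ℝ) + (i : ℝ) - 1 := by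
    intro i h1 hi
    have hnot : i ∉ {j : ℕ | 1 ≤ j ∧ α - (k : ℝ) + (j : ℝ) ≤ b j} :=
      Nat.notMem_of_lt_sInf (hkm ▸ hi)
    have hlt : b i < α - (k : ℝ) + (i : ℝ) := by
      by_contra hcon
      exact hnot ⟨h1, by linarith⟩
    have hit : i ≤ t := by omega
    obtain ⟨n, hn⟩ := hαb i h1 hit
    have heq : α - (k : ℝ) + (i : ℝ) - b i = ((n - k + i : ℤ) : ℝ) := by
      push_cast; linarith
    have hp : (0 : ℝ) < ((n - k + i : ℤ) : ℝ) := by rw [← heq]; linarith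
    have hp' : (1 : ℤ) ≤ n - k + i := by exact_mod_cast hp
    have : (1 : ℝ) ≤ ((n - k + i : ℤ) : ℝ) := by exact_mod_cast hp'
    linarith [heq ▸ this]
  -- r is monotone
  have hrmono : ∀ i j, 1 ≤ i → i ≤ j → j ≤ t → r i ≤ r j := by
    intro i j h1 hij hjt
    rcases lt_or_ge j km with hj | hj
    · rw [hr1 i (lt_of_le_of_lt hij hj), hr1 j hj]
      exact hb_le i j h1 hij hjt
    · rcases le_or_gt j k with hjk | hjk
      · rw [hr3 j hj hjk]
        rcases lt_or_ge i km with hi | hi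
        · rw [hr1 i hi]
          have hij' : (i : ℝ) ≤ (j : ℝ) := by exact_mod_cast hij
          linarith [hbi i h1 hi]
        · rw [hr3 i hi (le_trans hij hjk)]
          have hij' : (i : ℝ) ≤ (j : ℝ) := by exact_mod_cast hij
          linarith
      · rw [hr2 j hjk]
        rcases lt_or_ge i km with hi | hi
        · rw [hr1 i hi]; exact hb_le i j h1 hij hjt
        · rcases le_or_gt i k with hik | hik
          · rw [hr3 i hi hik]
            have h1' : (i : ℝ) ≤ (k : ℝ) := by exact_mod_cast hik
            have h2' : b k ≤ b j := hb_le k j hk1 hjk.le hjt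
            linarith
          · rw [hr2 i hik]; exact hb_le i j h1 hij hjt
  -- lower bound
  have hlow : ∀ i, 1 ≤ i → i ≤ t → 2 * a 1 - 1 ≤ a i + r i := by
    intro i h1 hit
    have ha1i : a 1 ≤ a i := ha_le 1 i le_rfl h1 hit
    rcases lt_or_ge i km with hi | hi
    · rw [hr1 i hi]
      have := hab i h1 hit
      linarith
    · rcases le_or_gt i k with hik | hik
      · rw [hr3 i hi hik]
        have hs := hstep i k h1 hik hkt
        linarith
      · rw [hr2 i hik]
        have := hab i h1 hit
        linarith
  have hpos : ∀ i, 1 ≤ i → i ≤ t → a i ≤ r i → 0 < a i + r i := by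
    intro i h1 hit har
    have := ha_le 1 i le_rfl h1 hit
    linarith
  have hmono : ∀ i j, 1 ≤ i → i < j → j ≤ t → a i + r i < a j + r j := by
    intro i j h1 hij hjt
    exact add_lt_add_of_lt_of_le (hamono i j h1 hij hjt) (hrmono i j h1 hij.le hjt)
  refine ⟨hmono, hlow, by linarith, hpos, ?_, ?_⟩
  · intro i j h1 hij hjt
    have := hmono i j h1 hij hjt
    linarith
  · intro i h1 hit har
    have := hpos i h1 hit har
    linarith
end

section
/- Fix a positive integer t and real numbers a_1 < … < a_t and b_1 < … < b_t with a_i ≤ b_i for every i, such that all the differences a_i − a_j, b_i − b_j, a_i − b_j are integers; assume a_1 ≥ 1/2. Let α be a real number with α − a_1 ∈ ℤ. Let c_1 < c_2 < … < c_t be real numbers with a_i − 1 ≤ c_i ≤ b_i and c_i − a_i ∈ ℤ for every i. Let J = {i ∈ {1,…,t} : c_i < b_i}, suppose J is nonempty, put s = |J|, and suppose that {c_i + 1 : i ∈ J} = {α − s + 1, α − s + 2, …, α}. Then, with k = max J, one has: J is exactly the interval of indices {k − s + 1, k − s + 2, …, k}; c_i = α − k + i − 1 for every i ∈ J; a_k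 ≤ α ≤ b_k; and k − s + 1 equals the least index i with α − k + i ≤ b_i (i.e. k − s + 1 = k_m). -/
/-- if the left endpoints `c i + 1` of the nonempty residual segments
(indices `i ∈ J`, `J = {i : c i < b i}` nonempty of cardinality `s`) form the consecutive
run `{α - s + 1, …, α}`, then with `k = max J`: `J = {k - s + 1, …, k}`,
`c i = α - k + i - 1` on `J`, `a k ≤ α ≤ b k`, and `k - s + 1` is the least index `i` with
`α - k + i ≤ b i`. -/
theorem residual_run_structure (t : ℕ) (ht : 0 < t) (a b : ℕ → ℝ)
    (hamono : ∀ i j, 1 ≤ i → i < j → j ≤ t → a i < a j)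
    (hbmono : ∀ i j, 1 ≤ i → i < j → j ≤ t → b i < b j)
    (hab : ∀ i, 1 ≤ i → i ≤ t → a i ≤ b i)
    (hint_aa : ∀ i j, 1 ≤ i → i ≤ t → 1 ≤ j → j ≤ t → ∃ n : ℤ, a i - a j = (n : ℝ))
    (hint_bb : ∀ i j, 1 ≤ i → i ≤ t → 1 ≤ j → j ≤ t → ∃ n : ℤ, b i - b j = (n : ℝ))
    (hint_ab : ∀ i j, 1 ≤ i → i ≤ t → 1 ≤ j → j ≤ t → ∃ n : ℤ, a i - b j = (n : ℝ))
    (ha1 : (1/2 : ℝ) ≤ a 1)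
    (α : ℝ) (hα : ∃ n : ℤ, α - a 1 = (n : ℝ))
    (c : ℕ → ℝ)
    (hcmono : ∀ i j, 1 ≤ i → i < j → j ≤ t → c i < c j)
    (hc : ∀ i, 1 ≤ i → i ≤ t → a i - 1 ≤ c i ∧ c i ≤ b i ∧ ∃ n : ℤ, c i - a i = (n : ℝ))
    (J : Finset ℕ) (hJ : J = (Finset.Icc 1 t).filter (fun i => c i < b i))
    (hJne : J.Nonempty)
    (s : ℕ) (hs : s = J.card)
    (hrun : J.image (fun i => c i + 1) =
      (Finset.range s).image (fun m : ℕ => α - (s : ℝ) + 1 + (m : ℝ)))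
    (k : ℕ) (hkJ : k ∈ J) (hkmax : ∀ i ∈ J, i ≤ k) :
    J = Finset.Icc (k - s + 1) k ∧
    (∀ i ∈ J, c i = α - (k : ℝ) + (i : ℝ) - 1) ∧
    (a k ≤ α ∧ α ≤ b k) ∧
    k - s + 1 = sInf {i : ℕ | 1 ≤ i ∧ α - (k : ℝ) + (i : ℝ) ≤ b i} := by
  -- basic facts about J
  have hJsub : ∀ i ∈ J, 1 ≤ i ∧ i ≤ t ∧ c i < b i := by
    intro i hi
    rw [hJ, Finset.mem_filter, Finset.mem_Icc] at hi
    tauto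
  obtain ⟨hk1, hkt, hck⟩ := hJsub k hkJ
  -- integrality of differences of c's, and b - c
  have hint_cc : ∀ i j, 1 ≤ i → i ≤ t → 1 ≤ j → j ≤ t → ∃ n : ℤ, c i - c j = (n : ℝ) := by
    intro i j hi1 hit hj1 hjt
    obtain ⟨n1, h1⟩ := (hc i hi1 hit).2.2
    obtain ⟨n2, h2⟩ := (hc j hj1 hjt).2.2
    obtain ⟨n3, h3⟩ := hint_aa i j hi1 hit hj1 hjt
    exact ⟨n1 - n2 + n3, by push_cast; linarith⟩
  have hint_bc : ∀ i j, 1 ≤ i → i ≤ t → 1 ≤ j → j ≤ t → ∃ n : ℤ, b i - c j = (n : ℝ) := by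
    intro i j hi1 hit hj1 hjt
    obtain ⟨n2, h2⟩ := (hc j hj1 hjt).2.2
    obtain ⟨n3, h3⟩ := hint_ab j i hj1 hjt hi1 hit
    exact ⟨-n3 - n2, by push_cast; linarith⟩
  -- gap lemma: c grows at least by 1 per step
  have hgap : ∀ i j, 1 ≤ i → i ≤ j → j ≤ t → (j : ℝ) - (i : ℝ) ≤ c j - c i := by
    intro i j hi1 hij
    induction j, hij using Nat.le_induction with
    | base => intro _; simp
    | succ j hij ih =>
      intro hjt
      have hjt' : j ≤ t := by omega
      have h1 : c j < c (j + 1) := hcmono j (j + 1) (by omega) (by omega) hjt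
      obtain ⟨n, hn⟩ := hint_cc (j + 1) j (by omega) hjt (by omega) hjt'
      have h0 : (0 : ℝ) < (n : ℝ) := by rw [← hn]; linarith
      have h1' : (1 : ℤ) ≤ n := by exact_mod_cast h0
      have h2 : (1 : ℝ) ≤ c (j + 1) - c j := by
        rw [hn]; exact_mod_cast h1'
      have h3 := ih hjt'
      push_cast
      linarith
  -- every i in J has α - s ≤ c i ≤ α - 1
  have hbound : ∀ i ∈ J, α - (s : ℝ) ≤ c i ∧ c i ≤ α - 1 := by
    intro i hi
    have hmem : c i + 1 ∈ (Finset.range s).image (fun m : ℕ => α - (s : ℝ) + 1 + (m : ℝ)) := by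
      rw [← hrun]; exact Finset.mem_image_of_mem _ hi
    obtain ⟨m, hm, heq⟩ := Finset.mem_image.mp hmem
    have hm' : m < s := Finset.mem_range.mp hm
    have hm1 : (m : ℝ) + 1 ≤ (s : ℝ) := by exact_mod_cast hm'
    have hm0 : (0 : ℝ) ≤ (m : ℝ) := Nat.cast_nonneg m
    constructor <;> linarith [heq]
  have hs1 : 1 ≤ s := by rw [hs]; exact Finset.card_pos.mpr hJne
  -- c k = α - 1
  have hck_eq : c k = α - 1 := by
    have hαmem : α ∈ J.image (fun i => c i + 1) := by
      rw [hrun]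
      refine Finset.mem_image.mpr ⟨s - 1, Finset.mem_range.mpr (by omega), ?_⟩
      have hcast : ((s - 1 : ℕ) : ℝ) = (s : ℝ) - 1 := by
        rw [Nat.cast_sub hs1, Nat.cast_one]
      rw [hcast]; ring
    obtain ⟨j, hjJ, hjc⟩ := Finset.mem_image.mp hαmem
    obtain ⟨hj1, hjt, _⟩ := hJsub j hjJ
    have hjk : j ≤ k := hkmax j hjJ
    have hle : c j ≤ c k := by
      rcases eq_or_lt_of_le hjk with h | h
      · rw [h]
      · exact le_of_lt (hcmono j k hj1 h hkt)
    have h2 := (hbound k hkJ).2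
    linarith [hjc]
  -- J is the interval [k-s+1, k]
  have hJIcc : J ⊆ Finset.Icc (k - s + 1) k := by
    intro i hi
    obtain ⟨hi1, hit, _⟩ := hJsub i hi
    have hik : i ≤ k := hkmax i hi
    have h1 : (k : ℝ) - (i : ℝ) ≤ c k - c i := hgap i k hi1 hik hkt
    have h2 := (hbound i hi).1
    have h3 : (k : ℝ) + 1 ≤ (i : ℝ) + (s : ℝ) := by linarith
    have h4 : k + 1 ≤ i + s := by exact_mod_cast h3
    exact Finset.mem_Icc.mpr ⟨by omega, hik⟩
  have hcard : (Finset.Icc (k - s + 1) k).card ≤ J.card := by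
    rw [Nat.card_Icc, ← hs]; omega
  have hJeq : J = Finset.Icc (k - s + 1) k := Finset.eq_of_subset_of_card_le hJIcc hcard
  have hks : s ≤ k := by
    have hcc : J.card = k + 1 - (k - s + 1) := by rw [hJeq, Nat.card_Icc]
    omega
  have hcast : ((k - s + 1 : ℕ) : ℝ) = (k : ℝ) - (s : ℝ) + 1 := by
    rw [Nat.cast_add, Nat.cast_sub hks, Nat.cast_one]
  have hi0J : k - s + 1 ∈ J := by
    rw [hJeq]; exact Finset.mem_Icc.mpr ⟨le_refl _, by omega⟩
  obtain ⟨hi01, hi0t, hci0b⟩ := hJsub _ hi0J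
  -- values of c on J
  have hcval : ∀ i ∈ J, c i = α - (k : ℝ) + (i : ℝ) - 1 := by
    intro i hi
    obtain ⟨hi1, hit, _⟩ := hJsub i hi
    have hik : i ≤ k := hkmax i hi
    have hi0i : k - s + 1 ≤ i := (Finset.mem_Icc.mp (hJeq ▸ hi)).1
    have hup : (k : ℝ) - (i : ℝ) ≤ c k - c i := hgap i k hi1 hik hkt
    have hlo : (i : ℝ) - ((k - s + 1 : ℕ) : ℝ) ≤ c i - c (k - s + 1) :=
      hgap (k - s + 1) i hi01 hi0i hit
    have hb := (hbound _ hi0J).1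
    linarith [hck_eq, hcast]
  -- a k ≤ α ≤ b k
  have hak : a k ≤ α := by
    have := (hc k hk1 hkt).1
    linarith [hck_eq]
  have hαb : α ≤ b k := by
    obtain ⟨n, hn⟩ := hint_bc k k hk1 hkt hk1 hkt
    have h0 : (0 : ℝ) < (n : ℝ) := by rw [← hn]; linarith
    have h1 : (1 : ℤ) ≤ n := by exact_mod_cast h0
    have h2 : (1 : ℝ) ≤ b k - c k := by rw [hn]; exact_mod_cast h1
    linarith [hck_eq]
  -- the sInf part
  have hi0c : c (k - s + 1) = α - (k : ℝ) + ((k - s + 1 : ℕ) : ℝ) - 1 := hcval _ hi0J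
  have hSmem : (k - s + 1) ∈ {i : ℕ | 1 ≤ i ∧ α - (k : ℝ) + (i : ℝ) ≤ b i} := by
    refine ⟨hi01, ?_⟩
    obtain ⟨n, hn⟩ := hint_bc _ _ hi01 hi0t hi01 hi0t
    have h0 : (0 : ℝ) < (n : ℝ) := by rw [← hn]; linarith
    have h1 : (1 : ℤ) ≤ n := by exact_mod_cast h0
    have h2 : (1 : ℝ) ≤ b (k - s + 1) - c (k - s + 1) := by rw [hn]; exact_mod_cast h1
    linarith [hi0c]
  have hSlb : ∀ m ∈ {i : ℕ | 1 ≤ i ∧ α - (k : ℝ) + (i : ℝ) ≤ b i}, k - s + 1 ≤ m := by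
    intro m hm
    by_contra h
    push_neg at h
    obtain ⟨hm1, hmb⟩ := hm
    have hmt : m ≤ t := by omega
    have hmJ : m ∉ J := by
      rw [hJeq]; simp only [Finset.mem_Icc, not_and_or, not_le]; left; exact h
    have hnlt : ¬ c m < b m := by
      intro h'
      exact hmJ (hJ ▸ Finset.mem_filter.mpr ⟨Finset.mem_Icc.mpr ⟨hm1, hmt⟩, h'⟩)
    have hcb : c m = b m := le_antisymm (hc m hm1 hmt).2.1 (not_lt.mp hnlt)
    have hg : ((k - s + 1 : ℕ) : ℝ) - (m : ℝ) ≤ c (k - s + 1) - c m :=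
      hgap m _ hm1 (by omega) hi0t
    linarith [hi0c, hcast]
  refine ⟨hJeq, hcval, ⟨hak, hαb⟩, ?_⟩
  exact le_antisymm (le_csInf ⟨_, hSmem⟩ hSlb) (Nat.sInf_le hSmem)
end
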